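/- arXiv:1706.02355 — 3 statements merged into one kernel-verified Lean document; each statement's English description precedes it below -/
import Mathlib

section
/- Let φ : S¹ → S¹ × S¹ be a continuous closed curve into the torus with degree pair (a, b), meaning the two coordinate projections of φ have topological degrees a and b respectively. If a ≠ b, then the image of φ intersects the diagonal D = {(u, u) : u ∈ S¹}. -/
open Real

/-- `CircleDeg f n` : the continuous map `f : S¹ → S¹` has topological degree `n`,
expressed via a continuous lift `F : ℝ → ℝ` along the exponential covering map. -/
def CircleDeg (f : Circle → Circle) (n : ℤ) : Prop :=
  ∃ F : ℝ → ℝ, Continuous F ∧ (∀ t : ℝ, f (Circle.exp t) = Circle.exp (F t)) ∧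
    ∀ t : ℝ, F (t + 2 * π) = F t + n * (2 * π)

/-- If a continuous closed curve `φ : S¹ → S¹ × S¹` into the torus has degree pair
`(a, b)` with `a ≠ b`, then its image intersects the diagonal. -/
theorem curve_with_unequal_degrees_meets_diagonal
    (φ : Circle → Circle × Circle) (hφ : Continuous φ) (a b : ℤ)
    (ha : CircleDeg (fun z => (φ z).1) a) (hb : CircleDeg (fun z => (φ z).2) b)
    (hab : a ≠ b) :
    ∃ z : Circle, (φ z).1 = (φ z).2 := by
  obtain ⟨F, hFc, hF, hFper⟩ := ha
  obtain ⟨G, hGc, hG, hGper⟩ := hb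
  set H : ℝ → ℝ := fun t => F t - G t with hH
  have hHc : Continuous H := hFc.sub hGc
  have hH2π : H (2 * π) = H 0 + (a - b : ℤ) * (2 * π) := by
    have h1 := hFper 0
    have h2 := hGper 0
    simp only [zero_add] at h1 h2
    simp [hH, h1, h2]
    push_cast
    ring
  -- find a multiple of 2π between H 0 and H (2π)
  set m : ℝ := min (H 0) (H (2 * π)) with hm
  set k : ℤ := ⌈m / (2 * π)⌉ with hk
  have h2π : (0:ℝ) < 2 * π := by positivity
  have hmem : (k : ℝ) * (2 * π) ∈ Set.uIcc (H 0) (H (2 * π)) := by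
    rw [Set.uIcc_eq_union]
    have h1 : m ≤ (k : ℝ) * (2 * π) := by
      have := Int.le_ceil (m / (2 * π))
      calc m = m / (2 * π) * (2 * π) := by field_simp
        _ ≤ (k : ℝ) * (2 * π) := by
            apply mul_le_mul_of_nonneg_right this h2π.le
    have h2 : (k : ℝ) * (2 * π) ≤ max (H 0) (H (2 * π)) := by
      have hceil : (k : ℝ) < m / (2 * π) + 1 := Int.ceil_lt_add_one _
      have hlt : (k : ℝ) * (2 * π) < m + 2 * π := by
        calc (k : ℝ) * (2 * π) < (m / (2 * π) + 1) * (2 * π) := by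
              exact mul_lt_mul_of_pos_right hceil h2π
          _ = m + 2 * π := by field_simp
      have hgap : m + 2 * π ≤ max (H 0) (H (2 * π)) := by
        have hab1 : (1 : ℝ) ≤ |(a - b : ℤ)| := by
          have : (1 : ℤ) ≤ |a - b| := Int.one_le_abs (sub_ne_zero.mpr hab)
          exact_mod_cast this
        have habs : |H (2 * π) - H 0| = |(a - b : ℤ)| * (2 * π) := by
          rw [hH2π, show H 0 + ((a - b : ℤ) : ℝ) * (2 * π) - H 0 = ((a - b : ℤ) : ℝ) * (2 * π) by ring,
            abs_mul, abs_of_pos h2π]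
          norm_cast
        have h2πle : 2 * π ≤ |H (2 * π) - H 0| := by
          rw [habs]
          nlinarith
        rcases le_total (H 0) (H (2 * π)) with h | h
        · have : m = H 0 := min_eq_left h
          rw [this, max_eq_right h]
          have : |H (2 * π) - H 0| = H (2 * π) - H 0 := abs_of_nonneg (by linarith)
          linarith [h2πle, this]
        · have : m = H (2 * π) := min_eq_right h
          rw [this, max_eq_left h]
          have : |H (2 * π) - H 0| = -(H (2 * π) - H 0) := abs_of_nonpos (by linarith)
          linarith [h2πle, this]
      linarith
    rcases le_total (H 0) (H (2 * π)) with h | h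
    · left; exact ⟨by rwa [hm, min_eq_left h] at h1, by rwa [max_eq_right h] at h2⟩
    · right; exact ⟨by rwa [hm, min_eq_right h] at h1, by rwa [max_eq_left h] at h2⟩
  obtain ⟨t, _, ht⟩ := intermediate_value_uIcc (hHc.continuousOn (s := Set.uIcc 0 (2 * π))) hmem
  refine ⟨Circle.exp t, ?_⟩
  have hFt : F t = G t + (k : ℝ) * (2 * π) := by
    have : F t - G t = (k : ℝ) * (2 * π) := ht
    linarith
  have e1 : (φ (Circle.exp t)).1 = Circle.exp (F t) := hF t
  have e2 : (φ (Circle.exp t)).2 = Circle.exp (G t) := hG t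
  rw [e1, e2, hFt]
  rw [show G t + (k : ℝ) * (2 * π) = G t + 2 * π * k by ring]
  rw [Circle.exp_add, Circle.exp_two_pi_mul_int, mul_one]
end

section
/- Any continuous closed curve ψ : S¹ → S¹ × S¹ whose image avoids the diagonal D = {(u,u) : u ∈ S¹} has degree pair of the form (a, a) for some integer a. -/
open Real


namespace CurveDiag

open Set

lemma slit_of_ne_neg_one {z : ℂ} (hz : ‖z‖ = 1) (h : z ≠ -1) :
    z ∈ Complex.slitPlane := by
  rw [Complex.mem_slitPlane_iff]
  by_contra hc
  push_neg at hc
  obtain ⟨hre, him⟩ := hc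
  have h2 : Complex.normSq z = 1 := by rw [← Complex.sq_norm, hz]; norm_num
  rw [Complex.normSq_apply, him] at h2
  have hre1 : z.re = -1 := by nlinarith
  exact h (Complex.ext (by simpa using hre1) (by simpa using him))

lemma exists_continuous_lift (g : Circle → Circle) (hg : Continuous g) :
    ∃ F : ℝ → ℝ, Continuous F ∧ ∀ t : ℝ, g (Circle.exp t) = Circle.exp (F t) := by
  set h : ℝ → Circle := fun t => g (Circle.exp t) with hh_def
  have hh : Continuous h := hg.comp Circle.exp.continuous
  have hper : ∀ (k : ℤ) (t : ℝ), h (t + k * (2 * π)) = h t := by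
    intro k t
    simp only [hh_def]
    congr 1
    exact Circle.exp_eq_exp.2 ⟨k, rfl⟩
  -- uniform continuity on a compact interval
  obtain ⟨δ₀, hδ₀pos, hδ₀⟩ : ∃ δ > 0, ∀ x ∈ Icc (-1 : ℝ) (2 * π + 1),
      ∀ y ∈ Icc (-1 : ℝ) (2 * π + 1), dist x y < δ → dist (h x) (h y) < 2 :=
    Metric.uniformContinuousOn_iff.1
      ((isCompact_Icc).uniformContinuousOn_of_continuous hh.continuousOn) 2 two_pos
  set δ : ℝ := min (δ₀ / 2) (1 / 2) with hδdef
  have hδpos : 0 < δ := lt_min (by linarith) (by norm_num)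
  have hδle : δ ≤ 1 / 2 := min_le_right _ _
  have hδlt : δ < δ₀ := lt_of_le_of_lt (min_le_left _ _) (by linarith)
  have h2π : (0 : ℝ) < 2 * π := by positivity
  -- two values at distance ≤ δ are never antipodal
  have key : ∀ s t : ℝ, |s - t| ≤ δ → ((h s : ℂ)) ≠ -((h t : ℂ)) := by
    intro s t hst
    set k : ℤ := ⌊s / (2 * π)⌋ with hk
    have h1 : (k : ℝ) ≤ s / (2 * π) := Int.floor_le _
    have h2 : s / (2 * π) < k + 1 := Int.lt_floor_add_one _
    have hs1 : (k : ℝ) * (2 * π) ≤ s := by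
      calc (k:ℝ) * (2*π) ≤ s / (2*π) * (2*π) := by nlinarith
        _ = s := by field_simp
    have hs2 : s < ((k : ℝ) + 1) * (2 * π) := by
      calc s = s / (2*π) * (2*π) := by field_simp
        _ < ((k:ℝ)+1) * (2*π) := by nlinarith
    have habs := abs_le.1 hst
    have hπ : (1:ℝ) ≤ π := by nlinarith [Real.pi_gt_three]
    have hsK : s - k * (2 * π) ∈ Icc (-1 : ℝ) (2 * π + 1) := by
      constructor <;> [linarith; linarith]
    have htK : t - k * (2 * π) ∈ Icc (-1 : ℝ) (2 * π + 1) := by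
      constructor <;> [linarith; linarith]
    have hdist : dist (s - k * (2 * π)) (t - k * (2 * π)) < δ₀ := by
      rw [Real.dist_eq]
      have : s - k * (2 * π) - (t - k * (2 * π)) = s - t := by ring
      rw [this]
      linarith
    have := hδ₀ _ hsK _ htK hdist
    have hs' : h (s - k * (2 * π)) = h s := by
      have := hper (-k) s; push_cast at this ⊢
      rw [← this]; ring_nf
    have ht' : h (t - k * (2 * π)) = h t := by
      have := hper (-k) t; push_cast at this ⊢
      rw [← this]; ring_nf
    rw [hs', ht'] at this
    intro heq
    rw [show dist (h s) (h t) = dist (h s : ℂ) (h t : ℂ) from rfl, Complex.dist_eq, heq] at this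
    have h22 : ‖(-(h t : ℂ) - (h t : ℂ))‖ = 2 := by
      have he : -(h t : ℂ) - (h t : ℂ) = -(2 * (h t : ℂ)) := by ring
      rw [he, norm_neg, norm_mul, Circle.norm_coe]
      norm_num
    rw [h22] at this
    exact lt_irrefl 2 this
  -- quotients of nearby values lie in the slit plane
  have hquot : ∀ s t : ℝ, |s - t| ≤ δ → ((h s / h t : Circle) : ℂ) ∈ Complex.slitPlane := by
    intro s t hst
    refine slit_of_ne_neg_one (Circle.norm_coe _) ?_
    rw [Circle.coe_div]
    intro hc
    rw [div_eq_iff (Circle.coe_ne_zero _)] at hc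
    exact key s t hst (by rw [hc]; ring)
  -- the grid increments
  set a : ℤ → ℝ := fun j => Complex.arg ((h (((j : ℝ) + 1) * δ) / h ((j : ℝ) * δ) : Circle)) with ha_def
  have hexp_a : ∀ j : ℤ, Circle.exp (a j) = h (((j : ℝ) + 1) * δ) / h ((j : ℝ) * δ) :=
    fun j => Circle.exp_arg _
  set c : ℤ → ℝ := fun m => (∑ j ∈ Finset.range m.toNat, a j) -
      ∑ j ∈ Finset.range (-m).toNat, a (-(j + 1 : ℤ)) with hc_def
  have hc_succ : ∀ m : ℤ, c (m + 1) = c m + a m := by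
    intro m
    rcases le_or_gt 0 m with hm | hm
    · have h1 : (m + 1).toNat = m.toNat + 1 := by omega
      have h2 : (-(m + 1)).toNat = 0 := by omega
      have h3 : (-m).toNat = 0 := by omega
      have h4 : (m.toNat : ℤ) = m := by omega
      simp only [hc_def, h1, h2, h3, Finset.sum_range_succ, Finset.range_zero,
        Finset.sum_empty, h4]
      ring
    · have h1 : (m + 1).toNat = 0 := by omega
      have h2 : m.toNat = 0 := by omega
      have h3 : (-m).toNat = (-(m + 1)).toNat + 1 := by omega
      have h4 : (-(((-(m + 1)).toNat : ℤ) + 1)) = m := by omega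
      simp only [hc_def, h1, h2, h3, Finset.sum_range_succ, Finset.range_zero,
        Finset.sum_empty, h4]
      ring
  have hexp_c : ∀ m : ℤ, Circle.exp (c m) = h ((m : ℝ) * δ) / h 0 := by
    intro m
    induction m using Int.induction_on with
    | zero => simp [hc_def]
    | succ n ih =>
      rw [hc_succ n, Circle.exp_add, ih, hexp_a n]
      ext
      push_cast
      field_simp
    | pred n ih =>
      have hstep := hc_succ (-(n : ℤ) - 1)
      have he : (-(n : ℤ) - 1) + 1 = -(n : ℤ) := by ring
      rw [he] at hstep
      have h5 : Circle.exp (c (-(n : ℤ) - 1)) =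
          Circle.exp (c (-(n : ℤ))) / Circle.exp (a (-(n : ℤ) - 1)) := by
        rw [← Circle.exp_sub]
        congr 1
        linarith [hstep]
      rw [h5, ih, hexp_a (-(n : ℤ) - 1)]
      have hc1 : ((-(n : ℤ) - 1 : ℤ) : ℝ) = -(n : ℝ) - 1 := by push_cast; ring
      rw [hc1]
      have hc2 : (-(n : ℝ) - 1) + 1 = -(n : ℝ) := by ring
      rw [hc2]
      have hc3 : ((-(n : ℤ) : ℤ) : ℝ) = -(n : ℝ) := by push_cast; ring
      rw [hc3]
      ext
      push_cast
      field_simp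
  -- floor facts
  have hfloor_mem : ∀ t : ℝ, (⌊t / δ⌋ : ℝ) * δ ≤ t ∧ t < ((⌊t / δ⌋ : ℝ) + 1) * δ := by
    intro t
    have h1 : (⌊t / δ⌋ : ℝ) ≤ t / δ := Int.floor_le _
    have h2 : t / δ < ⌊t / δ⌋ + 1 := Int.lt_floor_add_one _
    constructor
    · calc (⌊t / δ⌋ : ℝ) * δ ≤ t / δ * δ := by nlinarith
        _ = t := by field_simp
    · calc t = t / δ * δ := by field_simp
        _ < ((⌊t / δ⌋ : ℝ) + 1) * δ := by nlinarith
  have hfloor_eq : ∀ (m : ℤ) (t : ℝ), (m : ℝ) * δ ≤ t → t < ((m : ℝ) + 1) * δ → ⌊t / δ⌋ = m := by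
    intro m t h1 h2
    apply Int.floor_eq_iff.2
    constructor
    · rw [le_div_iff₀ hδpos]; exact h1
    · rw [div_lt_iff₀ hδpos]; push_cast; linarith
  -- the lift and its interval-wise descriptions
  set G : ℝ → ℝ := fun t => Complex.arg (h 0) + c ⌊t / δ⌋ +
      Complex.arg ((h t / h ((⌊t / δ⌋ : ℝ) * δ) : Circle)) with hG_def
  set Gm : ℤ → ℝ → ℝ := fun m t => Complex.arg (h 0) + c m +
      Complex.arg ((h t / h ((m : ℝ) * δ) : Circle)) with hGm_def
  have habs_le : ∀ (m : ℤ) (t : ℝ), t ∈ Icc ((m : ℝ) * δ) (((m : ℝ) + 1) * δ) →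
      |t - (m : ℝ) * δ| ≤ δ := by
    intro m t ht
    rw [abs_le]
    constructor
    · linarith [ht.1, hδpos.le]
    · have := ht.2; nlinarith [ht.2]
  have hG_eqOn : ∀ m : ℤ, ∀ t ∈ Icc ((m : ℝ) * δ) (((m : ℝ) + 1) * δ), G t = Gm m t := by
    intro m t ht
    rcases lt_or_eq_of_le ht.2 with hlt | heq
    · have : ⌊t / δ⌋ = m := hfloor_eq m t ht.1 hlt
      simp only [hG_def, hGm_def, this]
    · have hfl : ⌊t / δ⌋ = m + 1 := by
        apply hfloor_eq (m + 1) t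
        · push_cast; linarith [heq]
        · push_cast; nlinarith [heq, hδpos]
      have hdiv1 : (h t / h (((m : ℝ) + 1) * δ) : Circle) = 1 := by
        rw [heq, div_self']
      have harg : Complex.arg ((h t / h ((m : ℝ) * δ) : Circle)) = a m := by
        show Complex.arg ((h t / h ((m : ℝ) * δ) : Circle)) =
          Complex.arg ((h (((m : ℝ) + 1) * δ) / h ((m : ℝ) * δ) : Circle))
        rw [heq]
      simp only [hG_def, hGm_def, hfl, Int.cast_add, Int.cast_one]
      rw [hdiv1, Circle.coe_one, Complex.arg_one, add_zero, hc_succ m, harg]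
      ring
  have hcoe_cont : Continuous ((↑) : Circle → ℂ) := continuous_subtype_val
  have hGm_cont : ∀ m : ℤ, ContinuousOn (Gm m) (Icc ((m : ℝ) * δ) (((m : ℝ) + 1) * δ)) := by
    intro m t ht
    apply ContinuousAt.continuousWithinAt
    apply ContinuousAt.add continuousAt_const
    have hslit : ((h t / h ((m : ℝ) * δ) : Circle) : ℂ) ∈ Complex.slitPlane :=
      hquot t ((m : ℝ) * δ) (habs_le m t ht)
    have hcont2 : Continuous fun s : ℝ => ((h s / h ((m : ℝ) * δ) : Circle) : ℂ) :=
      hcoe_cont.comp (hh.div' continuous_const)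
    have : ContinuousAt (Complex.arg ∘ fun s : ℝ => ((h s / h ((m : ℝ) * δ) : Circle) : ℂ)) t :=
      ContinuousAt.comp (x := t)
        (f := fun s : ℝ => ((h s / h ((m : ℝ) * δ) : Circle) : ℂ))
        (Complex.continuousAt_arg hslit) hcont2.continuousAt
    exact this
  -- the closed intervals form a locally finite cover
  have hlf : LocallyFinite (fun m : ℤ => Icc ((m : ℝ) * δ) (((m : ℝ) + 1) * δ)) := by
    intro x
    refine ⟨Set.Ioo (x - δ) (x + δ), Ioo_mem_nhds (by linarith) (by linarith), ?_⟩
    apply Set.Finite.subset (Set.finite_Icc (⌊(x - 2 * δ) / δ⌋) (⌈(x + δ) / δ⌉))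
    rintro m ⟨y, ⟨hy1, hy2⟩, hy3, hy4⟩
    simp only [Set.mem_Icc]
    constructor
    · have hml : (x - 2 * δ) / δ < m := by
        rw [div_lt_iff₀ hδpos]
        nlinarith
      have := Int.floor_le ((x - 2 * δ) / δ)
      exact_mod_cast le_of_lt (lt_of_le_of_lt this hml)
    · have hmu : (m : ℝ) < (x + δ) / δ := by
        rw [lt_div_iff₀ hδpos]
        nlinarith
      have := Int.le_ceil ((x + δ) / δ)
      exact_mod_cast le_of_lt (lt_of_lt_of_le hmu this)
  have hcov : ⋃ m : ℤ, Icc ((m : ℝ) * δ) (((m : ℝ) + 1) * δ) = Set.univ := by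
    apply Set.eq_univ_iff_forall.2
    intro x
    exact Set.mem_iUnion.2 ⟨⌊x / δ⌋, (hfloor_mem x).1, le_of_lt (hfloor_mem x).2⟩
  have hGcont : Continuous G :=
    hlf.continuous hcov (fun m => isClosed_Icc)
      (fun m => (hGm_cont m).congr (hG_eqOn m))
  refine ⟨G, hGcont, fun t => ?_⟩
  have hmem : t ∈ Icc ((⌊t / δ⌋ : ℝ) * δ) (((⌊t / δ⌋ : ℝ) + 1) * δ) :=
    ⟨(hfloor_mem t).1, le_of_lt (hfloor_mem t).2⟩
  show h t = Circle.exp (G t)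
  rw [hG_def]
  simp only
  rw [Circle.exp_add, Circle.exp_add, Circle.exp_arg, hexp_c, Circle.exp_arg]
  ext
  push_cast
  field_simp

end CurveDiag

namespace CurveDiag

open Set

lemma exists_circleDeg (g : Circle → Circle) (hg : Continuous g) :
    ∃ n : ℤ, CircleDeg g n := by
  obtain ⟨F, hF, hlift⟩ := exists_continuous_lift g hg
  have hstep : ∀ t : ℝ, ∃ m : ℤ, F (t + 2 * π) = F t + m * (2 * π) := by
    intro t
    have hexp : Circle.exp (F (t + 2 * π)) = Circle.exp (F t) := by
      rw [← hlift, ← hlift, Circle.exp_add_two_pi]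
    exact Circle.exp_eq_exp.1 hexp
  set D : ℝ → ℝ := fun t => (F (t + 2 * π) - F t) / (2 * π) with hD_def
  have h2π : (0 : ℝ) < 2 * π := by positivity
  have hD : Continuous D := ((hF.comp (continuous_add_right (2 * π))).sub hF).div_const _
  have hDint : ∀ t : ℝ, ∃ m : ℤ, D t = m := by
    intro t
    obtain ⟨m, hm⟩ := hstep t
    exact ⟨m, by rw [hD_def]; simp only; rw [hm]; field_simp; ring⟩
  obtain ⟨n, hn⟩ := hDint 0
  refine ⟨n, F, hF, hlift, fun t => ?_⟩
  obtain ⟨m, hm⟩ := hDint t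
  have key2 : ∀ (k l : ℤ) (u v : ℝ), D u = k → D v = l → k < l → False := by
    intro k l u v hu hv hkl
    have hk1 : (k : ℝ) ≤ (l : ℝ) - 1 := by
      have : k ≤ l - 1 := by omega
      exact_mod_cast this
    have hmem : ((l : ℝ) - 1 / 2) ∈ Icc (D u) (D v) := by
      rw [hu, hv]
      constructor <;> linarith
    obtain ⟨s, hs⟩ := intermediate_value_univ u v hD hmem
    obtain ⟨j, hj⟩ := hDint s
    rw [hj] at hs
    have h2j : (2 * j : ℝ) = 2 * l - 1 := by push_cast; linarith
    have : (2 * j : ℤ) = 2 * l - 1 := by exact_mod_cast h2j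
    omega
  have hmn : m = n := by
    by_contra hne
    rcases lt_or_gt_of_ne hne with hlt | hgt
    · exact key2 m n t 0 hm hn hlt
    · exact key2 n m 0 t hn hm hgt
  have : D t = n := by rw [hm, hmn]
  rw [hD_def] at this
  simp only at this
  have := (div_eq_iff (ne_of_gt h2π)).1 this
  linarith [this]

end CurveDiag

/-- A continuous closed curve `ψ : S¹ → S¹ × S¹` whose image avoids the diagonal
has degree pair of the form `(a, a)` for some integer `a`. -/
theorem curve_avoiding_diagonal_has_equal_degrees
    (ψ : Circle → Circle × Circle) (hψ : Continuous ψ)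
    (hdiag : ∀ z : Circle, (ψ z).1 ≠ (ψ z).2) :
    ∃ a : ℤ, CircleDeg (fun z => (ψ z).1) a ∧ CircleDeg (fun z => (ψ z).2) a := by
  obtain ⟨n, G, hGc, hGlift, hGper⟩ := CurveDiag.exists_circleDeg (fun z => (ψ z).2) hψ.snd
  set w : Circle → Circle := fun z => (ψ z).1 / (ψ z).2 with hw_def
  have hw_cont : Continuous w := hψ.fst.div' hψ.snd
  set θ : Circle → ℝ := fun z => Complex.arg (-((w z : ℂ))) + π with hθ_def
  have hθ_exp : ∀ z, Circle.exp (θ z) = w z := by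
    intro z
    ext
    simp only [hθ_def, Circle.coe_exp]
    push_cast
    rw [add_mul, Complex.exp_add, Complex.exp_pi_mul_I]
    have habs := Complex.norm_mul_exp_arg_mul_I (-(w z : ℂ))
    rw [norm_neg, Circle.norm_coe, Complex.ofReal_one, one_mul] at habs
    rw [habs]
    ring
  have hθ_cont : Continuous θ := by
    apply Continuous.add ?_ continuous_const
    rw [continuous_iff_continuousAt]
    intro z
    have hslit : -((w z : ℂ)) ∈ Complex.slitPlane := by
      apply CurveDiag.slit_of_ne_neg_one
      · rw [norm_neg, Circle.norm_coe]
      · intro hc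
        have h1 : (w z : ℂ) = 1 := by
          have := neg_injective hc
          simpa using this
        exact hdiag z (div_eq_one.mp (Circle.coe_eq_one.mp h1))
    have hcont2 : Continuous fun z : Circle => -((w z : ℂ)) :=
      (continuous_subtype_val.comp hw_cont).neg
    have : ContinuousAt (Complex.arg ∘ fun z : Circle => -((w z : ℂ))) z :=
      ContinuousAt.comp (x := z) (f := fun z : Circle => -((w z : ℂ)))
        (Complex.continuousAt_arg hslit) hcont2.continuousAt
    exact this
  refine ⟨n, ⟨fun t => G t + θ (Circle.exp t), ?_, ?_, ?_⟩, ⟨G, hGc, hGlift, hGper⟩⟩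
  · exact hGc.add (hθ_cont.comp Circle.exp.continuous)
  · intro t
    rw [Circle.exp_add, hθ_exp, ← hGlift]
    simp only [hw_def]
    ext
    push_cast
    field_simp
  · intro t
    simp only
    rw [Circle.exp_add_two_pi, hGper]
    ring
end

section
/- Let Γ ⊆ X × X be the intersection of a nested family of compact relations Γ_ε (ε > 0, with Γ_ε ⊆ Γ_δ for ε ≤ δ), where X is a compact metric space. If for every ε > 0 the composition Γ₃,ε ∘ Γ₂,ε ∘ Γ₁,ε of three such nested families has a fixed point, then Γ₃ ∘ Γ₂ ∘ Γ₁ has a fixed point, where Γᵢ = ⋂_ε Γᵢ,ε. -/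
/-- Composition of relations: `R₂ ∘ R₁ = {(x,z) : ∃ y, (x,y) ∈ R₁ ∧ (y,z) ∈ R₂}`. -/
def relComp {X Y Z : Type*} (R₁ : Set (X × Y)) (R₂ : Set (Y × Z)) : Set (X × Z) :=
  {p : X × Z | ∃ y : Y, (p.1, y) ∈ R₁ ∧ (y, p.2) ∈ R₂}

/-- Let `X` be a compact metric space and, for `i = 1, 2, 3`, let `(Γᵢ ε)_{ε > 0}` be a
nested family of compact relations on `X` with intersection `Γᵢ = ⋂_{ε>0} Γᵢ ε`.  If for
every `ε > 0` the composition `Γ₃ ε ∘ Γ₂ ε ∘ Γ₁ ε` has a fixed point, then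
`Γ₃ ∘ Γ₂ ∘ Γ₁` has a fixed point. -/
theorem fixed_point_of_nested_relations (X : Type*) [MetricSpace X] [CompactSpace X]
    (Γ₁ Γ₂ Γ₃ : ℝ → Set (X × X))
    (hcpt : ∀ ε : ℝ, 0 < ε → IsCompact (Γ₁ ε) ∧ IsCompact (Γ₂ ε) ∧ IsCompact (Γ₃ ε))
    (hnest : ∀ ε δ : ℝ, 0 < ε → ε ≤ δ → Γ₁ ε ⊆ Γ₁ δ ∧ Γ₂ ε ⊆ Γ₂ δ ∧ Γ₃ ε ⊆ Γ₃ δ)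
    (hfix : ∀ ε : ℝ, 0 < ε →
      ∃ p : X, (p, p) ∈ relComp (relComp (Γ₁ ε) (Γ₂ ε)) (Γ₃ ε)) :
    ∃ p : X, (p, p) ∈ relComp (relComp (⋂ ε ∈ Set.Ioi (0 : ℝ), Γ₁ ε)
      (⋂ ε ∈ Set.Ioi (0 : ℝ), Γ₂ ε)) (⋂ ε ∈ Set.Ioi (0 : ℝ), Γ₃ ε) := by
  have hεpos : ∀ n : ℕ, (0 : ℝ) < 1 / (n + 1) := fun n => by positivity
  choose p hp using fun n : ℕ => hfix (1 / (n + 1)) (hεpos n)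
  choose z hz1 hz3 using fun n => hp n
  choose y hy1 hy2 using fun n => hz1 n
  obtain ⟨⟨a, b, c⟩, φ, hφ, hlim⟩ :=
    SeqCompactSpace.tendsto_subseq (fun n : ℕ => ((p n, y n, z n) : X × X × X))
  have ha : Filter.Tendsto (fun n => p (φ n)) Filter.atTop (nhds a) :=
    (continuous_fst.tendsto _).comp hlim
  have hb : Filter.Tendsto (fun n => y (φ n)) Filter.atTop (nhds b) :=
    ((continuous_fst.comp continuous_snd).tendsto _).comp hlim
  have hc : Filter.Tendsto (fun n => z (φ n)) Filter.atTop (nhds c) :=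
    ((continuous_snd.comp continuous_snd).tendsto _).comp hlim
  have hmono : ∀ n : ℕ, (1 : ℝ) / (φ n + 1) ≤ 1 / (n + 1) := by
    intro n
    have : (n : ℝ) ≤ φ n := Nat.cast_le.2 (hφ.id_le n)
    apply one_div_le_one_div_of_le (by positivity); linarith
  have key : ∀ (Γ : ℝ → Set (X × X)), (∀ ε, 0 < ε → IsCompact (Γ ε)) →
      (∀ ε δ, 0 < ε → ε ≤ δ → Γ ε ⊆ Γ δ) →
      ∀ (u v : ℕ → X) (l m : X), Filter.Tendsto u Filter.atTop (nhds l) →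
      Filter.Tendsto v Filter.atTop (nhds m) →
      (∀ n : ℕ, (u n, v n) ∈ Γ (1 / (n + 1))) →
      (l, m) ∈ ⋂ ε ∈ Set.Ioi (0 : ℝ), Γ ε := by
    intro Γ hc' hn u v l m hu hv hmem
    simp only [Set.mem_iInter]
    intro ε hε
    refine (hc' ε hε).isClosed.mem_of_tendsto (hu.prodMk_nhds hv) ?_
    obtain ⟨N, hN⟩ := exists_nat_gt (1 / ε)
    filter_upwards [Filter.eventually_ge_atTop N] with n hn'
    refine hn _ _ (hεpos n) ?_ (hmem n)
    rw [div_le_iff₀ (by positivity)]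
    rw [div_lt_iff₀ hε] at hN
    nlinarith [hN, (Nat.cast_le (α := ℝ)).2 hn']
  refine ⟨a, c, ⟨b, ?_, ?_⟩, ?_⟩
  · exact key Γ₁ (fun ε h => (hcpt ε h).1) (fun ε δ h h' => (hnest ε δ h h').1)
      _ _ a b ha hb
      (fun n => (hnest _ _ (hεpos (φ n)) (hmono n)).1 (hy1 (φ n)))
  · exact key Γ₂ (fun ε h => (hcpt ε h).2.1) (fun ε δ h h' => (hnest ε δ h h').2.1)
      _ _ b c hb hc
      (fun n => (hnest _ _ (hεpos (φ n)) (hmono n)).2.1 (hy2 (φ n)))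
  · exact key Γ₃ (fun ε h => (hcpt ε h).2.2) (fun ε δ h h' => (hnest ε δ h h').2.2)
      _ _ c a hc ha
      (fun n => (hnest _ _ (hεpos (φ n)) (hmono n)).2.2 (hz3 (φ n)))
end
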